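/- Let λ > 0 and let η : [0,∞) → ℝ be twice continuously differentiable with η(0) = 0, η'(0) = 1, and (1/2)η''(x) − q(x)η'(x) = −λη(x) for all x ≥ 0. Assume η is strictly increasing on [0,∞), that ∫₀^∞ e^{Q(y)} dy = ∞, and that S = ∫₀^∞ e^{Q(y)} (∫_y^∞ e^{−Q(z)} dz) dy = ∞. Then η(x)/Λ(x) → 0 as x → ∞, where Λ(x) = ∫₀ˣ e^{Q(y)} dy. -/

import Mathlib

open MeasureTheory Set Filter
open scoped ENNReal

private lemma primitive_hasDerivWithinAt {f : ℝ → ℝ} (hc : ContinuousOn f (Ici 0)) {b : ℝ}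
    (hb : 0 ≤ b) :
    HasDerivWithinAt (fun u => ∫ x in (0:ℝ)..u, f x) (f b) (Ici 0) b := by
  have hsub : uIcc (0:ℝ) b ⊆ Ici 0 := by
    rw [uIcc_of_le hb]; exact Icc_subset_Ici_self
  have hint : IntervalIntegrable f volume 0 b := (hc.mono hsub).intervalIntegrable
  rcases eq_or_lt_of_le hb with rfl | hb'
  · exact intervalIntegral.integral_hasDerivWithinAt_right (t := Ioi 0) hint
      ⟨Ioi 0, self_mem_nhdsWithin,
        ((hc.mono Ioi_subset_Ici_self).aestronglyMeasurable measurableSet_Ioi)⟩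
      ((hc _ self_mem_Ici).mono Ioi_subset_Ici_self)
  · have hnb : Ici (0:ℝ) ∈ nhds b := mem_of_superset (isOpen_Ioi.mem_nhds hb') Ioi_subset_Ici_self
    exact (intervalIntegral.integral_hasDerivAt_right hint
      ⟨Ioi 0, isOpen_Ioi.mem_nhds hb',
        ((hc.mono Ioi_subset_Ici_self).aestronglyMeasurable measurableSet_Ioi)⟩
      (hc.continuousAt hnb)).hasDerivWithinAt

private lemma tendsto_primitive_atTop {f : ℝ → ℝ} (hc : ContinuousOn f (Ici 0))
    (hf : ∀ x ∈ Ici (0:ℝ), 0 ≤ f x)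
    (h : ∫⁻ y in Ioi (0:ℝ), ENNReal.ofReal (f y) = ⊤) :
    Tendsto (fun T => ∫ t in (0:ℝ)..T, f t) atTop atTop := by
  have hint : ∀ a b : ℝ, 0 ≤ a → a ≤ b → IntervalIntegrable f volume a b := by
    intro a b ha hab
    apply (hc.mono _).intervalIntegrable
    rw [uIcc_of_le hab]
    exact fun x hx => le_trans ha hx.1
  have key : ∀ M : ℝ, ∃ n : ℕ, M ≤ ∫ t in (0:ℝ)..(n:ℝ), f t := by
    intro M
    by_contra hcon
    push_neg at hcon
    set gE : ℝ → ℝ≥0∞ := fun y => ENNReal.ofReal (f y) with hgE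
    have hmeas : ∀ n : ℕ, AEMeasurable ((Ioc (0:ℝ) (n:ℝ)).indicator gE) volume := by
      intro n
      rw [aemeasurable_indicator_iff measurableSet_Ioc]
      exact ENNReal.measurable_ofReal.comp_aemeasurable
        ((hc.mono (fun x hx => hx.1.le)).aemeasurable measurableSet_Ioc)
    have hlim : (Ioi (0:ℝ)).indicator gE = fun y => ⨆ n : ℕ, (Ioc (0:ℝ) (n:ℝ)).indicator gE y := by
      funext y
      simp only [indicator_apply, mem_Ioi, mem_Ioc]
      by_cases hy : 0 < y
      · rw [if_pos hy]
        apply le_antisymm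
        · refine le_iSup_of_le ⌈y⌉₊ ?_
          rw [if_pos ⟨hy, Nat.le_ceil y⟩]
        · exact iSup_le fun n => by split_ifs <;> simp
      · rw [if_neg hy]
        refine le_antisymm (zero_le) (iSup_le fun n => ?_)
        rw [if_neg (fun hyn => hy hyn.1)]
    have hmono2 : ∀ᵐ y ∂volume, Monotone fun n : ℕ => (Ioc (0:ℝ) (n:ℝ)).indicator gE y := by
      apply ae_of_all
      intro y m n hmn
      simp only [indicator_apply, mem_Ioc]
      split_ifs with h1 h2
      · exact le_rfl
      · exact absurd ⟨h1.1, h1.2.trans (by exact_mod_cast hmn)⟩ h2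
      all_goals exact zero_le
    have htop : ⨆ n : ℕ, ∫⁻ y, (Ioc (0:ℝ) (n:ℝ)).indicator gE y = ⊤ := by
      rw [← lintegral_iSup' hmeas hmono2]
      rw [← hlim, lintegral_indicator measurableSet_Ioi]
      exact h
    have hbd : ∀ n : ℕ, (∫⁻ y, (Ioc (0:ℝ) (n:ℝ)).indicator gE y) ≤ ENNReal.ofReal M := by
      intro n
      rw [lintegral_indicator measurableSet_Ioc]
      have hInt : IntegrableOn f (Ioc (0:ℝ) (n:ℝ)) := (hint 0 n le_rfl (Nat.cast_nonneg n)).1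
      rw [← ofReal_integral_eq_lintegral_ofReal hInt
        ((ae_restrict_iff' measurableSet_Ioc).2 (ae_of_all _ (fun y hy => hf y hy.1.le)))]
      apply ENNReal.ofReal_le_ofReal
      rw [← intervalIntegral.integral_of_le (Nat.cast_nonneg n)]
      exact (hcon n).le
    have hle : (⊤:ℝ≥0∞) ≤ ENNReal.ofReal M := htop ▸ iSup_le hbd
    exact ENNReal.ofReal_ne_top (top_le_iff.1 hle)
  rw [tendsto_atTop]
  intro M
  obtain ⟨n, hn⟩ := key M
  filter_upwards [eventually_ge_atTop (n:ℝ)] with T hT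
  have hsplit : ∫ t in (0:ℝ)..T, f t
      = (∫ t in (0:ℝ)..(n:ℝ), f t) + ∫ t in (n:ℝ)..T, f t :=
    (intervalIntegral.integral_add_adjacent_intervals
      (hint 0 n le_rfl (Nat.cast_nonneg n)) (hint n T (Nat.cast_nonneg n) hT)).symm
  have hnn : 0 ≤ ∫ t in (n:ℝ)..T, f t :=
    intervalIntegral.integral_nonneg hT (fun u hu => hf u (le_trans (Nat.cast_nonneg n) hu.1))
  linarith

private lemma swap_lintegral (f g : ℝ → ℝ)
    (hF : AEMeasurable (fun y => ENNReal.ofReal (f y)) (volume.restrict (Ioi (0:ℝ))))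
    (hG : AEMeasurable (fun z => ENNReal.ofReal (g z)) (volume.restrict (Ioi (0:ℝ)))) :
    (∫⁻ y in Ioi (0:ℝ), ENNReal.ofReal (f y) * ∫⁻ z in Ioi y, ENNReal.ofReal (g z))
      = ∫⁻ z in Ioi (0:ℝ), (∫⁻ y in Ioc (0:ℝ) z, ENNReal.ofReal (f y)) * ENNReal.ofReal (g z) := by
  set μ := volume.restrict (Ioi (0:ℝ)) with hμ
  set F : ℝ → ℝ≥0∞ := fun y => ENNReal.ofReal (f y) with hFdef
  set G : ℝ → ℝ≥0∞ := fun z => ENNReal.ofReal (g z) with hGdef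
  have hmeas_region : MeasurableSet {p : ℝ × ℝ | p.1 < p.2} :=
    measurableSet_lt measurable_fst measurable_snd
  have hum : AEMeasurable (Function.uncurry fun y z => F y * (Ioi y).indicator G z) (μ.prod μ) := by
    have heq : (Function.uncurry fun y z => F y * (Ioi y).indicator G z)
        = fun p : ℝ × ℝ => F p.1 * (G p.2 * {p : ℝ × ℝ | p.1 < p.2}.indicator 1 p) := by
      funext p
      by_cases hp : p.1 < p.2
      · simp [Function.uncurry, indicator_of_mem, hp, mem_Ioi, indicator_of_mem (show p ∈ {p : ℝ × ℝ | p.1 < p.2} from hp)]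
      · simp [Function.uncurry, indicator, hp, mem_Ioi]
    rw [heq]
    exact hF.comp_fst.mul (hG.comp_snd.mul ((measurable_one.indicator hmeas_region).aemeasurable))
  have step1 : (∫⁻ y in Ioi (0:ℝ), F y * ∫⁻ z in Ioi y, G z)
      = ∫⁻ y, ∫⁻ z, F y * (Ioi y).indicator G z ∂μ ∂μ := by
    apply lintegral_congr_ae
    filter_upwards [ae_restrict_mem measurableSet_Ioi] with y hy
    rw [lintegral_const_mul' _ _ ENNReal.ofReal_ne_top]
    congr 1
    rw [lintegral_indicator measurableSet_Ioi, hμ, Measure.restrict_restrict measurableSet_Ioi,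
      inter_eq_left.2 (Ioi_subset_Ioi (le_of_lt hy))]
  have step3 : ∀ z : ℝ, (∫⁻ y, F y * (Ioi y).indicator G z ∂μ)
      = (∫⁻ y in Ioc (0:ℝ) z, F y) * G z := by
    intro z
    have h1 : (fun y => F y * (Ioi y).indicator G z) = (Iio z).indicator (fun y => F y * G z) := by
      funext y
      by_cases h : y < z
      · simp [indicator_of_mem, h, mem_Ioi, mem_Iio]
      · simp [indicator, h, mem_Ioi, mem_Iio]
    rw [h1, lintegral_indicator measurableSet_Iio, hμ,
      Measure.restrict_restrict measurableSet_Iio, Set.Iio_inter_Ioi,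
      Measure.restrict_congr_set Ioo_ae_eq_Ioc,
      lintegral_mul_const' _ _ ENNReal.ofReal_ne_top]
  rw [step1, lintegral_lintegral_swap hum]
  exact lintegral_congr fun z => step3 z

/-- With `λ > 0` and `η` as in STATEMENT 0, if `η` is strictly
increasing on `[0,∞)`, `∫₀^∞ exp (Q y) dy = ∞` and
`S = ∫₀^∞ exp (Q y) (∫_y^∞ exp (-(Q z)) dz) dy = ∞`, then
`η x / Λ x → 0` as `x → ∞`, where `Λ x = ∫₀ˣ exp (Q y) dy`. -/
theorem stmt_6 (q Q : ℝ → ℝ) (hq : ContDiffOn ℝ 1 q (Ici 0))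
    (hQ : ∀ y, Q y = ∫ t in (0:ℝ)..y, 2 * q t)
    (lam : ℝ) (hlam : 0 < lam) (η η' η'' : ℝ → ℝ)
    (hη' : ∀ x ∈ Ici (0:ℝ), HasDerivWithinAt η (η' x) (Ici 0) x)
    (hη'' : ∀ x ∈ Ici (0:ℝ), HasDerivWithinAt η' (η'' x) (Ici 0) x)
    (hη''c : ContinuousOn η'' (Ici 0))
    (hη0 : η 0 = 0) (hη'0 : η' 0 = 1)
    (hode : ∀ x ≥ (0:ℝ), (1/2) * η'' x - q x * η' x = -lam * η x)
    (hmono : StrictMonoOn η (Ici 0))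
    (hΛ : ∫⁻ y in Ioi (0:ℝ), ENNReal.ofReal (Real.exp (Q y)) = ⊤)
    (hS : ∫⁻ y in Ioi (0:ℝ), ENNReal.ofReal (Real.exp (Q y)) *
        ∫⁻ z in Ioi y, ENNReal.ofReal (Real.exp (-(Q z))) = ⊤) :
    Tendsto (fun x => η x / ∫ y in (0:ℝ)..x, Real.exp (Q y)) atTop (nhds 0) := by
  have hqc : ContinuousOn q (Ici 0) := hq.continuousOn
  have hQd : ∀ b ∈ Ici (0:ℝ), HasDerivWithinAt Q (2 * q b) (Ici 0) b := by
    intro b hb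
    exact (primitive_hasDerivWithinAt (continuousOn_const.mul hqc) hb).congr
      (fun x _ => hQ x) (hQ b)
  have hQc : ContinuousOn Q (Ici 0) := fun b hb => (hQd b hb).continuousWithinAt
  have hEc : ContinuousOn (fun y => Real.exp (Q y)) (Ici 0) :=
    Real.continuous_exp.comp_continuousOn hQc
  have hE'c : ContinuousOn (fun y => Real.exp (-(Q y))) (Ici 0) :=
    Real.continuous_exp.comp_continuousOn hQc.neg
  set Λ : ℝ → ℝ := fun x => ∫ y in (0:ℝ)..x, Real.exp (Q y) with hΛdef
  have hΛd : ∀ b ∈ Ici (0:ℝ), HasDerivWithinAt Λ (Real.exp (Q b)) (Ici 0) b :=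
    fun b hb => primitive_hasDerivWithinAt hEc hb
  have hΛc : ContinuousOn Λ (Ici 0) := fun b hb => (hΛd b hb).continuousWithinAt
  have hΛ0 : Λ 0 = 0 := intervalIntegral.integral_same
  have hΛnn : ∀ b ∈ Ici (0:ℝ), 0 ≤ Λ b :=
    fun b hb => intervalIntegral.integral_nonneg hb (fun u _ => (Real.exp_pos _).le)
  have hη'c : ContinuousOn η' (Ici 0) := fun b hb => (hη'' b hb).continuousWithinAt
  have hηc : ContinuousOn η (Ici 0) := fun b hb => (hη' b hb).continuousWithinAt
  have hηnn : ∀ b ∈ Ici (0:ℝ), 0 ≤ η b := by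
    intro b hb
    rw [← hη0]
    exact hmono.monotoneOn self_mem_Ici hb hb
  set g : ℝ → ℝ := fun x => Real.exp (-(Q x)) * η' x with hgdef
  have hexpmul : ∀ x : ℝ, Real.exp (-(Q x)) * Real.exp (Q x) = 1 := by
    intro x; rw [← Real.exp_add]; simp
  have hgd : ∀ b ∈ Ici (0:ℝ),
      HasDerivWithinAt g (-(2*lam) * η b * Real.exp (-(Q b))) (Ici 0) b := by
    intro b hb
    have h1 : HasDerivWithinAt (fun x => Real.exp (-(Q x)))
        (Real.exp (-(Q b)) * -(2 * q b)) (Ici 0) b := ((hQd b hb).neg).exp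
    have h2 := h1.mul (hη'' b hb)
    have h3 : -(2*lam) * η b * Real.exp (-(Q b))
        = Real.exp (-(Q b)) * -(2 * q b) * η' b + Real.exp (-(Q b)) * η'' b := by
      linear_combination (-2 * Real.exp (-(Q b))) * (hode b hb)
    rw [h3]
    exact h2
  have hgc : ContinuousOn g (Ici 0) := hE'c.mul hη'c
  have hderivAt : ∀ {F : ℝ → ℝ} {F' : ℝ → ℝ},
      (∀ b ∈ Ici (0:ℝ), HasDerivWithinAt F (F' b) (Ici 0) b) →
      ∀ x : ℝ, 0 < x → HasDerivAt F (F' x) x := by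
    intro F F' hF x hx
    exact (hF x hx.le).hasDerivAt (mem_of_superset (isOpen_Ioi.mem_nhds hx) Ioi_subset_Ici_self)
  have hganti : AntitoneOn g (Ici 0) := by
    apply antitoneOn_of_deriv_nonpos (convex_Ici 0) hgc
    · rw [interior_Ici]
      intro x hx
      exact (hderivAt hgd x hx).differentiableAt.differentiableWithinAt
    · rw [interior_Ici]
      intro x hx
      rw [(hderivAt hgd x hx).deriv]
      have h4 : 0 ≤ lam * η x * Real.exp (-(Q x)) :=
        mul_nonneg (mul_nonneg hlam.le (hηnn x (mem_Ici.2 hx.le))) (Real.exp_pos _).le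
      nlinarith [h4]
  -- divergence of W
  have hmF : AEMeasurable (fun y => ENNReal.ofReal (Real.exp (Q y))) (volume.restrict (Ioi (0:ℝ))) :=
    ENNReal.measurable_ofReal.comp_aemeasurable
      ((hEc.mono Ioi_subset_Ici_self).aemeasurable measurableSet_Ioi)
  have hmG : AEMeasurable (fun z => ENNReal.ofReal (Real.exp (-(Q z)))) (volume.restrict (Ioi (0:ℝ))) :=
    ENNReal.measurable_ofReal.comp_aemeasurable
      ((hE'c.mono Ioi_subset_Ici_self).aemeasurable measurableSet_Ioi)
  have hswap := swap_lintegral (fun y => Real.exp (Q y)) (fun z => Real.exp (-(Q z))) hmF hmG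
  have hIoc : ∀ z ∈ Ioi (0:ℝ),
      (∫⁻ y in Ioc (0:ℝ) z, ENNReal.ofReal (Real.exp (Q y))) = ENNReal.ofReal (Λ z) := by
    intro z hz
    have hIcc : Icc (0:ℝ) z ⊆ Ici 0 := Icc_subset_Ici_self
    have hInt : IntegrableOn (fun y => Real.exp (Q y)) (Ioc (0:ℝ) z) :=
      ((hEc.mono hIcc).integrableOn_Icc).mono_set Ioc_subset_Icc_self
    rw [← ofReal_integral_eq_lintegral_ofReal hInt
      (ae_of_all _ (fun y => (Real.exp_pos _).le))]
    exact congrArg ENNReal.ofReal (intervalIntegral.integral_of_le (le_of_lt hz)).symm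
  have hWinf : ∫⁻ z in Ioi (0:ℝ), ENNReal.ofReal (Λ z * Real.exp (-(Q z))) = ⊤ := by
    have hcongr : ∫⁻ z in Ioi (0:ℝ), ENNReal.ofReal (Λ z * Real.exp (-(Q z)))
        = ∫⁻ z in Ioi (0:ℝ), (∫⁻ y in Ioc (0:ℝ) z, ENNReal.ofReal (Real.exp (Q y)))
            * ENNReal.ofReal (Real.exp (-(Q z))) := by
      apply lintegral_congr_ae
      filter_upwards [ae_restrict_mem measurableSet_Ioi] with z hz
      rw [hIoc z hz, ← ENNReal.ofReal_mul (hΛnn z (mem_Ici.2 (le_of_lt hz)))]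
    rw [hcongr, ← hswap]
    exact hS
  have hWto : Tendsto (fun T => ∫ t in (0:ℝ)..T, Λ t * Real.exp (-(Q t))) atTop atTop :=
    tendsto_primitive_atTop (hΛc.mul hE'c)
      (fun x hx => mul_nonneg (hΛnn x hx) (Real.exp_pos _).le) hWinf
  have hΛto : Tendsto Λ atTop atTop :=
    tendsto_primitive_atTop hEc (fun x _ => (Real.exp_pos _).le) hΛ
  -- key claim
  have claim : ∀ ε : ℝ, 0 < ε → ∃ X, 0 ≤ X ∧ ∀ x, X ≤ x → g x ≤ ε := by
    intro ε hε
    by_contra hcon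
    push_neg at hcon
    have hge : ∀ x, 0 ≤ x → ε < g x := by
      intro x hx
      obtain ⟨x', hxx', hgx'⟩ := hcon x hx
      exact hgx'.trans_le (hganti hx (hx.trans hxx') hxx')
    have hηlow : ∀ x, 0 ≤ x → ε * Λ x ≤ η x := by
      have hm : MonotoneOn (fun x => η x - ε * Λ x) (Ici 0) := by
        apply monotoneOn_of_deriv_nonneg (convex_Ici 0) (hηc.sub (continuousOn_const.mul hΛc))
        · rw [interior_Ici]
          intro x hx
          exact ((hderivAt hη' x hx).sub
            ((hderivAt hΛd x hx).const_mul ε)).differentiableAt.differentiableWithinAt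
        · rw [interior_Ici]
          intro x hx
          rw [show deriv (η - (fun x => ε) * Λ) x = _ from ((hderivAt hη' x hx).sub ((hderivAt hΛd x hx).const_mul ε)).deriv]
          have h1 := hge x hx.le
          simp only [hgdef] at h1
          have h6 : ε * Real.exp (Q x) < η' x := by
            have h7 := mul_lt_mul_of_pos_right h1 (Real.exp_pos (Q x))
            rwa [mul_comm (Real.exp (-(Q x))) (η' x), mul_assoc, hexpmul x, mul_one] at h7
          linarith
      intro x hx
      have := hm self_mem_Ici hx hx
      simp only [hη0, hΛ0] at this
      linarith
    set W : ℝ → ℝ := fun T => ∫ t in (0:ℝ)..T, Λ t * Real.exp (-(Q t)) with hWdef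
    have hWd : ∀ b ∈ Ici (0:ℝ),
        HasDerivWithinAt W (Λ b * Real.exp (-(Q b))) (Ici 0) b :=
      fun b hb => primitive_hasDerivWithinAt (hΛc.mul hE'c) hb
    have hWc : ContinuousOn W (Ici 0) := fun b hb => (hWd b hb).continuousWithinAt
    have hψd : ∀ b ∈ Ici (0:ℝ), HasDerivWithinAt (fun x => g x + 2*lam*ε * W x)
        (-(2*lam) * η b * Real.exp (-(Q b)) + 2*lam*ε * (Λ b * Real.exp (-(Q b)))) (Ici 0) b :=
      fun b hb => (hgd b hb).add ((hWd b hb).const_mul (2*lam*ε))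
    have hψ : AntitoneOn (fun x => g x + 2*lam*ε * W x) (Ici 0) := by
      apply antitoneOn_of_deriv_nonpos (convex_Ici 0) (hgc.add (continuousOn_const.mul hWc))
      · rw [interior_Ici]
        intro x hx
        exact (hderivAt hψd x hx).differentiableAt.differentiableWithinAt
      · rw [interior_Ici]
        intro x hx
        rw [show deriv (g + (fun x => 2 * lam * ε) * W) x = _ from (hderivAt hψd x hx).deriv]
        have h1 := hηlow x hx.le
        have h5 : 0 ≤ lam * Real.exp (-(Q x)) * (η x - ε * Λ x) :=
          mul_nonneg (mul_nonneg hlam.le (Real.exp_pos _).le) (by linarith)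
        nlinarith [h5]
    obtain ⟨T, hT, hT0⟩ := ((hWto.eventually_gt_atTop ((g 0 - ε)/(2*lam*ε))).and
      (eventually_ge_atTop (0:ℝ))).exists
    have hψT := hψ self_mem_Ici hT0 hT0
    have hW0 : W 0 = 0 := intervalIntegral.integral_same
    have hgT := hge T hT0
    have h2 : 0 < 2*lam*ε := by positivity
    rw [div_lt_iff₀ h2] at hT
    simp only [hW0, mul_zero, add_zero] at hψT
    linarith
  -- conclusion
  rw [NormedAddCommGroup.tendsto_nhds_zero]
  intro ε hε
  obtain ⟨X, hX0, hX⟩ := claim (ε/2) (by positivity)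
  set C := η X with hCdef
  have hCnn : 0 ≤ C := hηnn X hX0
  have hkey : ∀ x, X ≤ x → η x ≤ C + (ε/2) * Λ x := by
    have hIX : Ici X ⊆ Ici (0:ℝ) := Ici_subset_Ici.2 hX0
    have hm : MonotoneOn (fun x => (ε/2) * Λ x - η x) (Ici X) := by
      apply monotoneOn_of_deriv_nonneg (convex_Ici X)
        (((continuousOn_const.mul hΛc).sub hηc).mono hIX)
      · rw [interior_Ici]
        intro x hx
        have hx0 : 0 < x := lt_of_le_of_lt hX0 hx
        exact (((hderivAt hΛd x hx0).const_mul (ε/2)).sub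
          (hderivAt hη' x hx0)).differentiableAt.differentiableWithinAt
      · rw [interior_Ici]
        intro x hx
        have hx0 : 0 < x := lt_of_le_of_lt hX0 hx
        rw [show deriv ((fun x => ε / 2) * Λ - η) x = _ from (((hderivAt hΛd x hx0).const_mul (ε/2)).sub (hderivAt hη' x hx0)).deriv]
        have h1 := hX x (le_of_lt hx)
        simp only [hgdef] at h1
        have h6 : η' x ≤ ε/2 * Real.exp (Q x) := by
          have h7 := mul_le_mul_of_nonneg_right h1 (Real.exp_pos (Q x)).le
          rwa [mul_comm (Real.exp (-(Q x))) (η' x), mul_assoc, hexpmul x, mul_one] at h7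
        linarith
    intro x hx
    have h := hm self_mem_Ici hx hx
    simp only at h
    have hΛX : 0 ≤ (ε/2) * Λ X := mul_nonneg (by positivity) (hΛnn X hX0)
    linarith
  filter_upwards [eventually_ge_atTop X, hΛto.eventually_ge_atTop ((C+1)*(2/ε))] with x hx1 hx2
  have hx0 : (0:ℝ) ≤ x := le_trans hX0 hx1
  have hΛpos : 0 < Λ x := lt_of_lt_of_le (by positivity) hx2
  have hηx : 0 ≤ η x := hηnn x hx0
  rw [Real.norm_eq_abs, abs_of_nonneg (div_nonneg hηx hΛpos.le), div_lt_iff₀ hΛpos]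
  have h1 := hkey x hx1
  have h2 : (ε/2) * ((C+1)*(2/ε)) = C+1 := by field_simp
  have h3 : (ε/2) * ((C+1)*(2/ε)) ≤ (ε/2) * Λ x :=
    mul_le_mul_of_nonneg_left hx2 (by positivity)
  have h4 : ε * Λ x = 2 * ((ε/2) * Λ x) := by ring
  linarith
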